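/- For p > 2 and any a, b ∈ ℝ^n, | |a|^{p-2} a - |b|^{p-2} b | ≤ (p-1) (|a| + |b|)^{p-2} |a - b|. -/

import Mathlib

lemma pLap_aux (q x y : ℝ) (hq : 0 < q) (hy : 0 ≤ y) (hyx : y ≤ x) :
    (x ^ q - y ^ q) * y ≤ q * (x + y) ^ q * (x - y) := by
  rcases eq_or_lt_of_le hy with hy0 | hy0
  · have hx : 0 ≤ x := le_trans hy hyx
    rw [← hy0]
    simp only [mul_zero, sub_zero, add_zero]
    exact mul_nonneg (mul_nonneg hq.le (Real.rpow_nonneg hx _)) hx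
  · rcases eq_or_lt_of_le hyx with rfl | hlt
    · simp
    · have hypos : 0 < y := hy0
      have hxpos : 0 < x := lt_trans hypos hlt
      have hcont : ContinuousOn (fun t : ℝ => t ^ q) (Set.Icc y x) := by
        intro t ht
        exact (Real.continuousAt_rpow_const t q (Or.inl (ne_of_gt (lt_of_lt_of_le hypos ht.1)))).continuousWithinAt
      obtain ⟨c, hc, hderiv⟩ := exists_hasDerivAt_eq_slope (fun t : ℝ => t ^ q)
        (fun t => q * t ^ (q - 1)) hlt hcont
        (fun t ht => Real.hasDerivAt_rpow_const (Or.inl (ne_of_gt (lt_trans hypos ht.1))))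
      have hcpos : 0 < c := lt_trans hypos hc.1
      have hxy : (0:ℝ) < x + y := by linarith
      have hslope : x ^ q - y ^ q = q * c ^ (q - 1) * (x - y) := by
        have hne : x - y ≠ 0 := ne_of_gt (sub_pos.mpr hlt)
        field_simp at hderiv
        linarith [hderiv]
      have hkey : c ^ (q - 1) * y ≤ (x + y) ^ q := by
        rcases le_or_gt 1 q with h1 | h1
        · have h2 : c ^ (q - 1) ≤ (x + y) ^ (q - 1) :=
            Real.rpow_le_rpow hcpos.le (by linarith [hc.2]) (by linarith)
          calc c ^ (q - 1) * y ≤ (x + y) ^ (q - 1) * (x + y) :=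
                mul_le_mul h2 (by linarith) hy (Real.rpow_nonneg hxy.le _)
            _ = (x + y) ^ q := by
                rw [← Real.rpow_add_one hxy.ne']; ring_nf
        · calc c ^ (q - 1) * y ≤ c ^ (q - 1) * c :=
                mul_le_mul_of_nonneg_left hc.1.le (Real.rpow_nonneg hcpos.le _)
            _ = c ^ q := by rw [← Real.rpow_add_one hcpos.ne']; ring_nf
            _ ≤ (x + y) ^ q := Real.rpow_le_rpow hcpos.le (by linarith [hc.2]) hq.le
      calc (x ^ q - y ^ q) * y = q * (c ^ (q - 1) * y) * (x - y) := by
            rw [hslope]; ring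
        _ ≤ q * (x + y) ^ q * (x - y) := by
            have := mul_le_mul_of_nonneg_left hkey hq.le
            exact mul_le_mul_of_nonneg_right this (by linarith)

theorem pLaplacian_lipschitz_explicit (p : ℝ) (hp : p > 2) (n : ℕ)
    (a b : EuclideanSpace ℝ (Fin n)) :
    ‖(‖a‖ ^ (p - 2)) • a - (‖b‖ ^ (p - 2)) • b‖ ≤
      (p - 1) * (‖a‖ + ‖b‖) ^ (p - 2) * ‖a - b‖ := by
  have hq : (0:ℝ) < p - 2 := by linarith
  wlog hab : ‖b‖ ≤ ‖a‖ with H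
  · push_neg at hab
    have h := H p hp n b a hq hab.le
    rw [norm_sub_rev]
    rw [norm_sub_rev a b, add_comm ‖a‖]
    exact h
  have hdecomp : (‖a‖ ^ (p - 2)) • a - (‖b‖ ^ (p - 2)) • b =
      (‖a‖ ^ (p - 2)) • (a - b) + (‖a‖ ^ (p - 2) - ‖b‖ ^ (p - 2)) • b := by
    module
  have hmono : ‖b‖ ^ (p - 2) ≤ ‖a‖ ^ (p - 2) :=
    Real.rpow_le_rpow (norm_nonneg b) hab hq.le
  have hxy : (0:ℝ) ≤ ‖a‖ + ‖b‖ := by positivity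
  calc ‖(‖a‖ ^ (p - 2)) • a - (‖b‖ ^ (p - 2)) • b‖
      ≤ ‖(‖a‖ ^ (p - 2)) • (a - b)‖ + ‖(‖a‖ ^ (p - 2) - ‖b‖ ^ (p - 2)) • b‖ := by
        rw [hdecomp]; exact norm_add_le _ _
    _ = ‖a‖ ^ (p - 2) * ‖a - b‖ + (‖a‖ ^ (p - 2) - ‖b‖ ^ (p - 2)) * ‖b‖ := by
        rw [norm_smul, norm_smul, Real.norm_eq_abs, Real.norm_eq_abs,
          abs_of_nonneg (Real.rpow_nonneg (norm_nonneg a) _),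
          abs_of_nonneg (by linarith)]
    _ ≤ (‖a‖ + ‖b‖) ^ (p - 2) * ‖a - b‖ + (p - 2) * (‖a‖ + ‖b‖) ^ (p - 2) * (‖a‖ - ‖b‖) := by
        refine add_le_add ?_ (pLap_aux (p - 2) ‖a‖ ‖b‖ hq (norm_nonneg b) hab)
        exact mul_le_mul_of_nonneg_right
          (Real.rpow_le_rpow (norm_nonneg a) (by linarith [norm_nonneg b]) hq.le)
          (norm_nonneg _)
    _ ≤ (‖a‖ + ‖b‖) ^ (p - 2) * ‖a - b‖ + (p - 2) * (‖a‖ + ‖b‖) ^ (p - 2) * ‖a - b‖ := by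
        refine add_le_add_right (mul_le_mul_of_nonneg_left (norm_sub_norm_le a b) ?_) _
        positivity
    _ = (p - 1) * (‖a‖ + ‖b‖) ^ (p - 2) * ‖a - b‖ := by ring
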